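/- Let x ∈ ST_n^r be reducible (i.e. not irreducible), let y ∈ ST_m^s, and let f ∈ Sh^≺(r,s). Then f∘(x×y) is either reducible, or belongs to 𝔅(l) for some 0 ≤ l < m. -/

import Mathlib

open scoped TensorProduct

namespace SurjPerm

/-- The maximal value of a word (the `r` such that a surjection lands in `{1,…,r}`). -/
def rk (l : List ℕ) : ℕ := l.foldr max 0

/-- `l` is (the list of values of) a surjective map `{1,…,n} → {1,…,r}`
    with `n = l.length ≥ 1` and `r = rk l`. -/
def IsST (l : List ℕ) : Prop := l ≠ [] ∧ ∀ k, k ∈ l ↔ 1 ≤ k ∧ k ≤ rk l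

/-- membership in `ST_n^r`. -/
def memST (l : List ℕ) (n r : ℕ) : Prop := IsST l ∧ l.length = n ∧ rk l = r

/-- concatenation `x × y`. -/
def cat (x y : List ℕ) : List ℕ := x ++ y.map (· + rk x)

/-- iterated concatenation `x¹ × x² × … × xᵖ`. -/
def catAll (l : List (List ℕ)) : List ℕ := l.foldr cat []

/-- standardization of a word. -/
def stdList (l : List ℕ) : List ℕ := l.map fun v => (l.dedup.filter (· ≤ v)).length

/-- corestriction `x|^K`. -/
def corestrict (x : List ℕ) (K : Finset ℕ) : List ℕ := stdList (x.filter (· ∈ K))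

/-- the `i`-th entry of a word, `1`-indexed: `ent f i = f(i)`. -/
def ent (l : List ℕ) (i : ℕ) : ℕ := l.getD (i - 1) 0

/-- composition `f ∘ x` of the map (word) `f` with the map (word) `x`. -/
def wcomp (f x : List ℕ) : List ℕ := x.map fun v => ent f v

/-- the identity permutation `1_n` as a word. -/
def idW (n : ℕ) : List ℕ := (List.range n).map (· + 1)

/-- the permutation `ε(r₁,…,r_p)` as a word: the `i`-th block of positions
    carries the values shifted above all later blocks. -/
def epsW : List ℕ → List ℕ
  | [] => []
  | r :: rs => ((List.range r).map (· + rs.sum + 1)) ++ epsW rs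

/-- `x \ y := ε(r,s) ∘ (x × y)`. -/
def bsl (x y : List ℕ) : List ℕ := wcomp (epsW [rk x, rk y]) (cat x y)

/-- `f` is strictly increasing on each block of the composition `ns`. -/
def blockIncr (ns f : List ℕ) : Prop :=
  ∀ k, k < ns.length → ∀ i j, (ns.take k).sum < i → i < j → j ≤ (ns.take (k + 1)).sum →
    ent f i < ent f j

/-- `(n₁,…,n_p)`-stuffles. -/
def IsStuffle (ns f : List ℕ) : Prop := IsST f ∧ f.length = ns.sum ∧ blockIncr ns f

/-- `(n₁,…,n_p)`-shuffles: stuffles which are permutations. -/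
def IsShuffle (ns f : List ℕ) : Prop := IsStuffle ns f ∧ rk f = ns.sum

/-- irreducible surjections. -/
def Irr (l : List ℕ) : Prop := IsST l ∧ ¬ ∃ g h, IsST g ∧ IsST h ∧ l = cat g h

/-- the set of irreducible surjections of arity `n`. -/
def IrrN (n : ℕ) : Set (List ℕ) := {l | Irr l ∧ l.length = n}

/-- the product `x · y` on surjections. -/
def dotW (x y : List ℕ) : List ℕ :=
  x.map (fun v => if v < rk x then v else rk x + rk y - 1) ++
    y.map (fun v => if v < rk y then v + rk x - 1 else rk x + rk y - 1)

/-- iterated `·` product `x¹ · x² · … · xᵖ`. -/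
def dotAll : List (List ℕ) → List ℕ
  | [] => []
  | a :: as => as.foldl dotW a

/-- indecomposable surjections (for the `·` product). -/
def Indec (l : List ℕ) : Prop := IsST l ∧ ¬ ∃ a b, IsST a ∧ IsST b ∧ l = dotW a b

/-- the set `𝒟`. -/
def inD (x : List ℕ) : Prop :=
  IsST x ∧ ((x = [1] ∨ x = [1, 1]) ∨
    (3 ≤ x.length ∧ Irr x ∧
      ¬ ∃ y z, ∃ _ : y.length < x.length, inD y ∧ IsST z ∧ x = bsl y z))
termination_by x.length
decreasing_by assumption

/-- the set `𝒞`. -/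
def inC (x : List ℕ) : Prop :=
  Irr x ∧
    ((∃ y z, ∃ _ : y.length < x.length, Irr y ∧ ¬ inC y ∧ IsST z ∧ x = bsl y z) ∨
      (∃ a b, IsST a ∧ IsST b ∧ x = dotW a b))
termination_by x.length
decreasing_by assumption

/-- the set `𝔅(l)`, with `𝔅(0) = 𝒟`. -/
def inBfrak (l : ℕ) (x : List ℕ) : Prop :=
  if l = 0 then inD x else ∃ u v, inD u ∧ IsST v ∧ v.length = l ∧ x = bsl u v

/-- `t_i ∘ f`: exchange the values `i` and `i+1`. -/
def swapVal (i : ℕ) (l : List ℕ) : List ℕ :=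
  l.map fun v => if v = i then i + 1 else if v = i + 1 then i else v

/-- covering relation of the weak Bruhat order on `ST_n^r`:
    `f < t_i ∘ f` whenever `f⁻¹(i) < f⁻¹(i+1)`. -/
def wBCov (f g : List ℕ) : Prop :=
  ∃ i, 1 ≤ i ∧ i + 1 ≤ rk f ∧ g = swapVal i f ∧
    ∀ a b, a < f.length → b < f.length → f.getD a 0 = i → f.getD b 0 = i + 1 → a < b

/-- strict weak Bruhat order. -/
def wBlt : List ℕ → List ℕ → Prop := Relation.TransGen wBCov

/-- weak Bruhat order. -/
def wBle : List ℕ → List ℕ → Prop := Relation.ReflTransGen wBCov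

/-- the (0-indexed) positions `j₁-1 < … < j_λ-1` where the maximal value is attained. -/
def maxPos (x : List ℕ) : List ℕ :=
  (List.range x.length).filter fun i => x.getD i 0 = rk x

/-- `λ(x)`. -/
def lam (x : List ℕ) : ℕ := (maxPos x).length

/-- `𝕄(x) = (𝕄(x)_λ, …, 𝕄(x)₁)`. -/
def Mword (x : List ℕ) : List ℕ :=
  (List.zipWith (fun a b => b - a - 1) (maxPos x) ((maxPos x).drop 1) ++
    [x.length - (maxPos x).getLastD 0 - 1]).reverse

/-- the pieces `x|^{1..l₁}, x|^{l₁+1..l₂}, …, x|^{l_p+1..r}`. -/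
def pieces (x : List ℕ) (ls : List ℕ) : List (List ℕ) :=
  ((0 :: ls).zip (ls ++ [rk x])).map fun p => corestrict x (Finset.Icc (p.1 + 1) p.2)

/-- `x^{(l₁,…,l_p)}`. -/
def xfam (x : List ℕ) (ls : List ℕ) : List ℕ := catAll (pieces x ls)

variable (𝕂 : Type) [Field 𝕂]

/-- the vector space `𝕂[ST]` (with basis all words; only the basis elements in `ST` matter). -/
abbrev V := List ℕ →₀ 𝕂

/-- the coproduct `Δ`. -/
noncomputable def Delta : V 𝕂 →ₗ[𝕂] TensorProduct 𝕂 (V 𝕂) (V 𝕂) :=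
  Finsupp.lsum 𝕂 fun x => LinearMap.toSpanSingleton 𝕂 _
    (∑ i ∈ Finset.Ico 1 (rk x),
      Finsupp.single (corestrict x (Finset.Icc 1 i)) (1 : 𝕂) ⊗ₜ[𝕂]
        Finsupp.single (corestrict x (Finset.Icc (i + 1) (rk x))) (1 : 𝕂))

/-- the subspace `𝕂[ST_n]`. -/
noncomputable def STspanN (n : ℕ) : Submodule 𝕂 (V 𝕂) :=
  Submodule.span 𝕂 {v | ∃ l, IsST l ∧ l.length = n ∧ v = Finsupp.single l 1}

/-- `Prim(ST)_n = {v ∈ 𝕂[ST_n] : Δ v = 0}`. -/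
noncomputable def PrimN (n : ℕ) : Submodule 𝕂 (V 𝕂) :=
  STspanN 𝕂 n ⊓ LinearMap.ker (Delta 𝕂)

/-- the projection `E`. -/
noncomputable def Emap : V 𝕂 →ₗ[𝕂] V 𝕂 :=
  Finsupp.lsum 𝕂 fun x => LinearMap.toSpanSingleton 𝕂 _
    (∑ᶠ ls ∈ {ls : List ℕ | ls.Chain' (· < ·) ∧ ∀ l ∈ ls, 0 < l ∧ l < rk x},
      ((-1 : 𝕂) ^ ls.length) • Finsupp.single (xfam x ls) (1 : 𝕂))

/-- generic bilinear-on-basis operation indexed by a set of shuffles. -/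
noncomputable def shOp (P : ℕ → ℕ → List ℕ → Prop) (a b : V 𝕂) : V 𝕂 :=
  Finsupp.sum a fun x cx => Finsupp.sum b fun y cy =>
    (cx * cy) • ∑ᶠ f ∈ {f : List ℕ | IsShuffle [rk x, rk y] f ∧ P (rk x) (rk y) f},
      Finsupp.single (wcomp f (cat x y)) (1 : 𝕂)

/-- the dendriform operation `≻`. -/
noncomputable def succOp : V 𝕂 → V 𝕂 → V 𝕂 :=
  shOp 𝕂 fun r s f => ent f r < ent f (r + s)

/-- the dendriform operation `≺`. -/
noncomputable def precOp : V 𝕂 → V 𝕂 → V 𝕂 :=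
  shOp 𝕂 fun r s f => ent f (r + s) < ent f r

/-- `ω^≺(y₁,…,y_k) = y₁ ≺ (y₂ ≺ (… ≺ y_k))`. -/
noncomputable def omPrec : List (V 𝕂) → V 𝕂
  | [] => 0
  | [a] => a
  | a :: as => precOp 𝕂 a (omPrec as)

/-- `ω^≻(y₁,…,y_k) = ((y₁ ≻ y₂) ≻ …) ≻ y_k`. -/
noncomputable def omSucc : List (V 𝕂) → V 𝕂
  | [] => 0
  | a :: as => as.foldl (succOp 𝕂) a

/-- `ω^≺(l) ≻ x ≺ ω^≻(r)`, empty factors omitted. -/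
noncomputable def mterm (x : V 𝕂) : List (V 𝕂) → List (V 𝕂) → V 𝕂
  | [], [] => x
  | [], r => precOp 𝕂 x (omSucc 𝕂 r)
  | l, [] => succOp 𝕂 (omPrec 𝕂 l) x
  | l, r => precOp 𝕂 (succOp 𝕂 (omPrec 𝕂 l) x) (omSucc 𝕂 r)

/-- the brace operation `M^{ST}_{1k}(x; y₁,…,y_k)`. -/
noncomputable def braceM (x : V 𝕂) (ys : List (V 𝕂)) : V 𝕂 :=
  ∑ j ∈ Finset.range (ys.length + 1),
    ((-1 : 𝕂) ^ (ys.length - j)) • mterm 𝕂 x (ys.take j) (ys.drop j)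

/-- generic bilinear-on-basis operation indexed by a set of stuffles, with `q`-weights
    `q^{s(f) - c}` where `s(f) = |f| - rk f`. -/
noncomputable def stOp (q : 𝕂) (c : ℕ) (P : ℕ → ℕ → List ℕ → Prop) (a b : V 𝕂) : V 𝕂 :=
  Finsupp.sum a fun x cx => Finsupp.sum b fun y cy =>
    (cx * cy) • ∑ᶠ f ∈ {f : List ℕ | IsStuffle [rk x, rk y] f ∧ P (rk x) (rk y) f},
      q ^ (f.length - rk f - c) • Finsupp.single (wcomp f (cat x y)) (1 : 𝕂)

/-- `≻_q`. -/
noncomputable def succQ (q : 𝕂) : V 𝕂 → V 𝕂 → V 𝕂 :=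
  stOp 𝕂 q 0 fun r s f => ent f r < ent f (r + s)

/-- `≺_q`. -/
noncomputable def precQ (q : 𝕂) : V 𝕂 → V 𝕂 → V 𝕂 :=
  stOp 𝕂 q 0 fun r s f => ent f (r + s) < ent f r

/-- `·_q`. -/
noncomputable def dotQ (q : 𝕂) : V 𝕂 → V 𝕂 → V 𝕂 :=
  stOp 𝕂 q 1 fun r s f => ent f r = ent f (r + s)

/-- `≽_q = ≻_q + q ·_q`. -/
noncomputable def succcQ (q : 𝕂) (a b : V 𝕂) : V 𝕂 := succQ 𝕂 q a b + q • dotQ 𝕂 q a b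

/-- `ω^{≺_q}`. -/
noncomputable def omPrecQ (q : 𝕂) : List (V 𝕂) → V 𝕂
  | [] => 0
  | [a] => a
  | a :: as => precQ 𝕂 q a (omPrecQ q as)

/-- `ω^{≽_q}`. -/
noncomputable def omSucccQ (q : 𝕂) : List (V 𝕂) → V 𝕂
  | [] => 0
  | a :: as => as.foldl (succcQ 𝕂 q) a

/-- `ω^{≺_q}(l) ≽_q x ≺_q ω^{≽_q}(r)`, empty factors omitted. -/
noncomputable def mtermQ (q : 𝕂) (x : V 𝕂) : List (V 𝕂) → List (V 𝕂) → V 𝕂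
  | [], [] => x
  | [], r => precQ 𝕂 q x (omSucccQ 𝕂 q r)
  | l, [] => succcQ 𝕂 q (omPrecQ 𝕂 q l) x
  | l, r => precQ 𝕂 q (succcQ 𝕂 q (omPrecQ 𝕂 q l) x) (omSucccQ 𝕂 q r)

/-- the brace operation `M^{ST(q)}_{1k}`. -/
noncomputable def braceMQ (q : 𝕂) (x : V 𝕂) (ys : List (V 𝕂)) : V 𝕂 :=
  ∑ j ∈ Finset.range (ys.length + 1),
    ((-1 : 𝕂) ^ (ys.length - j)) • mtermQ 𝕂 q x (ys.take j) (ys.drop j)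

/-- the shuffle product of two basis elements. -/
noncomputable def shufSingle (x y : List ℕ) : V 𝕂 :=
  ∑ᶠ f ∈ {f : List ℕ | IsShuffle [rk x, rk y] f},
    Finsupp.single (wcomp f (cat x y)) (1 : 𝕂)

/-- the shuffle product `*` on `𝕂[ST]`, as a bilinear map. -/
noncomputable def shufL : V 𝕂 →ₗ[𝕂] V 𝕂 →ₗ[𝕂] V 𝕂 :=
  Finsupp.lsum 𝕂 fun x => LinearMap.toSpanSingleton 𝕂 _
    (Finsupp.lsum 𝕂 fun y => LinearMap.toSpanSingleton 𝕂 _ (shufSingle 𝕂 x y))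

/-- the augmented space `𝕂·1 ⊕ 𝕂[ST]`. -/
abbrev Vp := 𝕂 × V 𝕂

/-- inclusion `𝕂[ST] ↪ 𝕂·1 ⊕ 𝕂[ST]`. -/
noncomputable def inclV : V 𝕂 →ₗ[𝕂] Vp 𝕂 := LinearMap.inr 𝕂 𝕂 (V 𝕂)

/-- the unit `1`. -/
noncomputable def oneVp : Vp 𝕂 := (1, 0)

/-- the unital extension of the shuffle product to `𝕂·1 ⊕ 𝕂[ST]`, as a bilinear map:
    `(a + x)(b + y) = ab + (a y + b x + x * y)`.  In particular `1 * u = u = u * 1`. -/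
noncomputable def mulVp : Vp 𝕂 →ₗ[𝕂] Vp 𝕂 →ₗ[𝕂] Vp 𝕂 :=
  LinearMap.mk₂ 𝕂 (fun u v => (u.1 * v.1, u.1 • v.2 + v.1 • u.2 + shufL 𝕂 u.2 v.2))
    (fun u u' v => by
      refine Prod.ext ?_ ?_ <;>
        simp [add_mul, add_smul, smul_add, map_add, LinearMap.add_apply] <;> abel)
    (fun c u v => by
      refine Prod.ext ?_ ?_ <;>
        simp [mul_assoc, mul_smul, smul_add, smul_comm c v.1] <;> abel)
    (fun u v v' => by
      refine Prod.ext ?_ ?_ <;>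
        simp [mul_add, add_smul, smul_add, map_add, LinearMap.add_apply] <;> abel)
    (fun c u v => by
      refine Prod.ext ?_ ?_ <;>
        simp [mul_left_comm, mul_smul, smul_add, smul_comm c u.1] <;> abel)

/-- the extension `Δ⁺` of `Δ` to `𝕂·1 ⊕ 𝕂[ST]`, with `Δ⁺(1) = 1 ⊗ 1` and
    `Δ⁺(x) = x ⊗ 1 + 1 ⊗ x + Δ(x)` for `x ∈ 𝕂[ST]`. -/
noncomputable def DeltaP : Vp 𝕂 →ₗ[𝕂] TensorProduct 𝕂 (Vp 𝕂) (Vp 𝕂) :=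
  (LinearMap.toSpanSingleton 𝕂 _ (oneVp 𝕂 ⊗ₜ[𝕂] oneVp 𝕂)).comp (LinearMap.fst 𝕂 𝕂 (V 𝕂))
    + (((TensorProduct.mk 𝕂 (Vp 𝕂) (Vp 𝕂)).flip (oneVp 𝕂)).comp (inclV 𝕂)).comp
        (LinearMap.snd 𝕂 𝕂 (V 𝕂))
    + ((TensorProduct.mk 𝕂 (Vp 𝕂) (Vp 𝕂) (oneVp 𝕂)).comp (inclV 𝕂)).comp
        (LinearMap.snd 𝕂 𝕂 (V 𝕂))
    + ((TensorProduct.map (inclV 𝕂) (inclV 𝕂)).comp (Delta 𝕂)).comp (LinearMap.snd 𝕂 𝕂 (V 𝕂))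

/-- componentwise product on the tensor square: `(a⊗b)·(c⊗d) = (a·c)⊗(b·d)`. -/
noncomputable def mulTsq :
    TensorProduct 𝕂 (Vp 𝕂) (Vp 𝕂) →ₗ[𝕂]
      TensorProduct 𝕂 (Vp 𝕂) (Vp 𝕂) →ₗ[𝕂] TensorProduct 𝕂 (Vp 𝕂) (Vp 𝕂) :=
  TensorProduct.lift
    (((TensorProduct.mapBilinear (RingHom.id 𝕂) (Vp 𝕂) (Vp 𝕂) (Vp 𝕂) (Vp 𝕂)).comp (mulVp 𝕂)).compl₂
      (mulVp 𝕂))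

/-- concatenation on the right with a fixed word, linearized: `x ↦ x × y`. -/
noncomputable def catR (y : List ℕ) : V 𝕂 →ₗ[𝕂] V 𝕂 :=
  Finsupp.lsum 𝕂 fun x => LinearMap.toSpanSingleton 𝕂 _ (Finsupp.single (cat x y) (1 : 𝕂))

/-- concatenation on the left with a fixed word, linearized: `y ↦ x × y`. -/
noncomputable def catL (x : List ℕ) : V 𝕂 →ₗ[𝕂] V 𝕂 :=
  Finsupp.lsum 𝕂 fun y => LinearMap.toSpanSingleton 𝕂 _ (Finsupp.single (cat x y) (1 : 𝕂))

/-- `Sh^•(r₁,…,r_p)`: surjections onto `{1,…,R-p+1}` (where `R = r₁+…+r_p`), strictly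
    increasing on each block, attaining the maximal value exactly at the block ends, and whose
    corestriction to `{1,…,R-p}` is a `(r₁-1,…,r_p-1)`-shuffle. -/
def ShBull (rs : List ℕ) (f : List ℕ) : Prop :=
  memST f rs.sum (rs.sum - rs.length + 1) ∧ blockIncr rs f ∧
    (∀ i, 1 ≤ i → i ≤ rs.sum →
      (ent f i = rs.sum - rs.length + 1 ↔ ∃ k, k < rs.length ∧ i = (rs.take (k + 1)).sum)) ∧
    IsShuffle (rs.map (· - 1)) (corestrict f (Finset.Icc 1 (rs.sum - rs.length)))

section Aux

lemma rk_cons (a : ℕ) (t : List ℕ) : rk (a :: t) = max a (rk t) := rfl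

lemma le_rk_of_mem {l : List ℕ} {k : ℕ} (h : k ∈ l) : k ≤ rk l := by
  induction l with
  | nil => cases h
  | cons a t ih =>
    rcases List.mem_cons.1 h with rfl | h'
    · exact le_max_left _ _
    · exact le_trans (ih h') (le_max_right _ _)

lemma rk_le_iff {l : List ℕ} {c : ℕ} : rk l ≤ c ↔ ∀ k ∈ l, k ≤ c := by
  induction l with
  | nil => simp [rk]
  | cons a t ih =>
    rw [rk_cons]
    simp [ih]

lemma IsST.ne_nil {l : List ℕ} (h : IsST l) : l ≠ [] := h.1

lemma IsST.one_le_of_mem {l : List ℕ} {k : ℕ} (h : IsST l) (hk : k ∈ l) : 1 ≤ k :=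
  ((h.2 k).1 hk).1

lemma IsST.one_le_rk {l : List ℕ} (h : IsST l) : 1 ≤ rk l := by
  obtain ⟨k, hk⟩ := List.exists_mem_of_ne_nil l h.1
  exact le_trans (h.one_le_of_mem hk) (le_rk_of_mem hk)

lemma IsST.mem_of_le {l : List ℕ} {k : ℕ} (h : IsST l) (h1 : 1 ≤ k) (h2 : k ≤ rk l) : k ∈ l :=
  (h.2 k).2 ⟨h1, h2⟩

lemma isST_of_forall {l : List ℕ} {R : ℕ} (h0 : l ≠ []) (h : ∀ k, k ∈ l ↔ 1 ≤ k ∧ k ≤ R) :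
    IsST l ∧ rk l = R := by
  have hR : rk l = R := by
    obtain ⟨k, hk⟩ := List.exists_mem_of_ne_nil l h0
    have hk' := (h k).1 hk
    have hmem : R ∈ l := (h R).2 ⟨by omega, le_rfl⟩
    have h1 : R ≤ rk l := le_rk_of_mem hmem
    have h2 : rk l ≤ R := rk_le_iff.2 fun k hk => ((h k).1 hk).2
    omega
  exact ⟨⟨h0, by rw [hR]; exact h⟩, hR⟩

lemma ent_mem {f : List ℕ} {i : ℕ} (h1 : 1 ≤ i) (h2 : i ≤ f.length) : ent f i ∈ f := by
  have hlt : i - 1 < f.length := by omega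
  rw [ent, List.getD_eq_getElem _ _ hlt]
  exact List.getElem_mem hlt

lemma exists_ent_eq {f : List ℕ} {k : ℕ} (h : k ∈ f) :
    ∃ i, 1 ≤ i ∧ i ≤ f.length ∧ ent f i = k := by
  obtain ⟨j, hj, hjk⟩ := List.mem_iff_getElem.1 h
  refine ⟨j + 1, by omega, by omega, ?_⟩
  rw [ent, Nat.add_sub_cancel, List.getD_eq_getElem _ _ hj, hjk]

lemma rk_append (a b : List ℕ) : rk (a ++ b) = max (rk a) (rk b) := by
  induction a with
  | nil => simp [rk]
  | cons x t ih => rw [List.cons_append, rk_cons, rk_cons, ih, max_assoc]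

lemma rk_map_add {l : List ℕ} (c : ℕ) (h : l ≠ []) : rk (l.map (· + c)) = rk l + c := by
  induction l with
  | nil => simp at h
  | cons a t ih =>
    cases t with
    | nil => simp [rk]
    | cons b t' =>
      rw [List.map_cons, rk_cons, rk_cons, ih (by simp)]
      omega

lemma isST_cat {x y : List ℕ} (hx : IsST x) (hy : IsST y) :
    IsST (cat x y) ∧ rk (cat x y) = rk x + rk y := by
  apply isST_of_forall
  · simp only [cat, ne_eq, List.append_eq_nil_iff]
    rintro ⟨h1, -⟩
    exact hx.1 h1
  · intro k
    constructor
    · intro hk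
      rcases List.mem_append.1 hk with hk | hk
      · have := (hx.2 k).1 hk
        omega
      · obtain ⟨k0, hk0, hke⟩ := List.mem_map.1 hk
        have := (hy.2 k0).1 hk0
        omega
    · intro ⟨h1, h2⟩
      by_cases hc : k ≤ rk x
      · exact List.mem_append.2 (Or.inl (hx.mem_of_le h1 hc))
      · refine List.mem_append.2 (Or.inr (List.mem_map.2
          ⟨k - rk x, hy.mem_of_le (by omega) (by omega), by omega⟩))

lemma length_cat (x y : List ℕ) : (cat x y).length = x.length + y.length := by
  simp [cat]

lemma epsW_pair (a b : ℕ) : epsW [a, b] =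
    (List.range a).map (fun z => z + b + 1) ++ (List.range b).map (fun z => z + 1) := by
  simp [epsW]

lemma ent_epsW_low {a b v : ℕ} (h1 : 1 ≤ v) (h2 : v ≤ a) :
    ent (epsW [a, b]) v = v + b := by
  have hv : v - 1 < a := by omega
  rw [epsW_pair, ent, List.getD_append _ _ _ _ (by simpa using hv),
    List.getD_eq_getElem _ _ (by simpa using hv), List.getElem_map, List.getElem_range]
  omega

lemma ent_epsW_high {a b v : ℕ} (h1 : a < v) (h2 : v ≤ a + b) :
    ent (epsW [a, b]) v = v - a := by
  have hge : a ≤ v - 1 := by omega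
  have hlt : v - 1 - a < b := by omega
  rw [epsW_pair, ent, List.getD_append_right _ _ _ _ (by simpa using hge)]
  have hlen : ((List.range a).map (fun z => z + b + 1)).length = a := by simp
  rw [hlen, List.getD_eq_getElem _ _ (by simpa using hlt), List.getElem_map, List.getElem_range]
  omega

lemma bsl_eq {x y : List ℕ} (hx : IsST x) (hy : IsST y) :
    bsl x y = x.map (· + rk y) ++ y := by
  rw [bsl, wcomp, cat, List.map_append, List.map_map]
  congr 1
  · apply List.map_congr_left
    intro k hk
    have := (hx.2 k).1 hk
    exact ent_epsW_low this.1 this.2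
  · have : ∀ k ∈ y, ((fun v => ent (epsW [rk x, rk y]) v) ∘ (· + rk x)) k = k := by
      intro k hk
      have := (hy.2 k).1 hk
      simp only [Function.comp]
      rw [ent_epsW_high (by omega) (by omega)]
      omega
    rw [List.map_congr_left this]
    simp

lemma isST_wcomp {f z : List ℕ} (hf : IsST f) (hz : IsST z) (hlen : rk z = f.length) :
    IsST (wcomp f z) ∧ rk (wcomp f z) = rk f := by
  apply isST_of_forall
  · simp only [wcomp, ne_eq, List.map_eq_nil_iff]
    exact hz.1
  · intro k
    constructor
    · intro hk
      obtain ⟨k0, hk0, hke⟩ := List.mem_map.1 hk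
      have h0 := (hz.2 k0).1 hk0
      have hm : ent f k0 ∈ f := ent_mem h0.1 (by omega)
      rw [hke] at hm
      exact (hf.2 _).1 hm
    · intro ⟨h1, h2⟩
      obtain ⟨i, hi1, hi2, hie⟩ := exists_ent_eq (hf.mem_of_le h1 h2)
      exact List.mem_map.2 ⟨i, hz.mem_of_le hi1 (by omega), hie⟩

lemma cat_ne_bsl {g h p q : List ℕ} (hg : IsST g) (hh : IsST h) (hp : IsST p) (hq : IsST q) :
    cat g h ≠ bsl p q := by
  intro he
  rw [bsl_eq hp hq, cat] at he
  -- he : g ++ h.map (·+rk g) = p.map (·+rk q) ++ q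
  rcases le_or_gt g.length p.length with hl | hl
  · -- g is a prefix of p.map (·+rk q)
    have hgp : g = (p.map (· + rk q)).take g.length := by
      have := congrArg (List.take g.length) he
      rwa [List.take_left, List.take_append_of_le_length (by simpa using hl)] at this
    have h1g : (1:ℕ) ∈ g := hg.mem_of_le le_rfl hg.one_le_rk
    rw [hgp] at h1g
    have h1p : (1:ℕ) ∈ p.map (· + rk q) := List.mem_of_mem_take h1g
    obtain ⟨k0, hk0, hke⟩ := List.mem_map.1 h1p
    have := hp.one_le_of_mem hk0
    have := hq.one_le_rk
    omega
  · -- h.map (·+rk g) is a suffix of q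
    have hhq : h.map (· + rk g) = q.drop (g.length - p.length) := by
      have := congrArg (List.drop g.length) he
      rw [List.drop_left, List.drop_append,
        List.drop_eq_nil_of_le (by simpa using le_of_lt hl), List.nil_append] at this
      simpa using this
    have hmm : rk h + rk g ∈ h.map (· + rk g) := List.mem_map.2 ⟨rk h, hh.mem_of_le hh.one_le_rk le_rfl, rfl⟩
    rw [hhq] at hmm
    have hmq : rk h + rk g ∈ q := List.mem_of_mem_drop hmm
    have h1 : rk h + rk g ≤ rk q := le_rk_of_mem hmq
    -- compare ranks
    have h2 : max (rk g) (rk (h.map (· + rk g))) = max (rk (p.map (· + rk q))) (rk q) := by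
      rw [← rk_append, ← rk_append, he]
    rw [rk_map_add _ hh.1, rk_map_add _ hp.1] at h2
    have := hg.one_le_rk
    have := hp.one_le_rk
    have := hh.one_le_rk
    have := hq.one_le_rk
    omega

end Aux

section Aux2

lemma inD_isST {u : List ℕ} (h : inD u) : IsST u := by
  rw [inD] at h
  exact h.1

lemma isST_one : IsST [1] := by
  refine ⟨by simp, fun k => ?_⟩
  have : rk [1] = 1 := rfl
  rw [this]
  simp
  omega

lemma inD_one : inD [1] := by
  rw [inD]
  exact ⟨isST_one, Or.inl (Or.inl rfl)⟩

lemma irr_decomp {w : List ℕ} (hw : Irr w) :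
    inD w ∨ ∃ u v, inD u ∧ IsST v ∧ 1 ≤ v.length ∧ w = bsl u v := by
  by_cases hD : inD w
  · exact Or.inl hD
  right
  rw [inD] at hD
  push_neg at hD
  have hst := hw.1
  have h2 := hD hst
  obtain ⟨⟨hne1, hne2⟩, h3⟩ := h2
  rcases Nat.lt_or_ge w.length 3 with hlen | hlen
  · rcases w with _ | ⟨k1, w1⟩
    · exact absurd rfl hst.1
    rcases w1 with _ | ⟨k2, w2⟩
    · exfalso
      have h1 : 1 ≤ k1 := hst.one_le_of_mem (by simp)
      have hone : (1:ℕ) ∈ [k1] := hst.mem_of_le le_rfl (by simp [rk]; omega)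
      simp at hone
      exact hne1 (by rw [hone])
    rcases w2 with _ | ⟨k3, w3⟩
    swap
    · exfalso; simp at hlen; omega
    have hr : rk [k1, k2] = max k1 k2 := by simp [rk]
    have h1 : 1 ≤ k1 := hst.one_le_of_mem (by simp)
    have h2 : 1 ≤ k2 := hst.one_le_of_mem (by simp)
    have hmr := le_max_right k1 k2
    have hml := le_max_left k1 k2
    have hone : (1:ℕ) ∈ [k1, k2] := hst.mem_of_le le_rfl (by rw [hr]; omega)
    simp at hone
    by_cases hk11 : k1 = 1
    · subst hk11
      have hk2 : k2 = 2 := by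
        rcases Nat.lt_or_ge k2 2 with hlt | hge
        · exfalso; interval_cases k2 <;> simp_all
        · have htwo : (2:ℕ) ∈ [1, k2] := hst.mem_of_le (by omega) (by rw [hr]; omega)
          simp at htwo
          omega
      subst hk2
      exact absurd ⟨[1], [1], isST_one, isST_one, by decide⟩ hw.2
    · have hk1 : k2 = 1 := by omega
      subst hk1
      have hk2 : k1 = 2 := by
        have htwo : (2:ℕ) ∈ [k1, 1] := hst.mem_of_le (by omega) (by rw [hr]; omega)
        simp at htwo
        omega
      subst hk2
      exact ⟨[1], [1], inD_one, isST_one, by simp, by decide⟩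
  · obtain ⟨y, z, _, hy, hz, he⟩ := h3 hlen hw
    exact ⟨y, z, hy, hz, by have := List.length_pos_iff.2 hz.1; omega, he⟩

end Aux2

section Aux3

lemma main_contra {x y f g h u v : List ℕ}
    (hx : IsST x) (hy : IsST y)
    (hfst : IsST f) (hflen : f.length = rk x + rk y) (hfrk : rk f = rk x + rk y)
    (hbi : blockIncr [rk x, rk y] f)
    (hg : IsST g) (hh : IsST h) (hxgh : x = cat g h)
    (hu : inD u) (hv : IsST v) (hlm : y.length ≤ v.length)
    (heq : wcomp f (cat x y) = bsl u v) : False := by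
  classical
  set r := rk x with hr
  set s := rk y with hs
  set c := rk v with hc
  have hust : IsST u := inD_isST hu
  -- rewrite both sides of heq
  have heq' : x.map (fun k => ent f k) ++ y.map (fun t => ent f (t + r)) =
      u.map (· + c) ++ v := by
    rw [← bsl_eq hust hv, ← heq, wcomp, cat, List.map_append, List.map_map]
    rfl
  have hxylen : u.length + v.length = x.length + y.length := by
    have := congrArg List.length heq'
    simp at this
    omega
  set p := u.length with hp
  have hp1 : 1 ≤ p := List.length_pos_iff.2 hust.1
  have hpn : p ≤ x.length := by omega
  -- take and drop
  have hU : (x.take p).map (fun k => ent f k) = u.map (· + c) := by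
    have h2 := congrArg (List.take p) heq'
    rw [List.take_append_of_le_length (by simpa using hpn), List.take_left' (by simp [hp]),
      ← List.map_take] at h2
    exact h2
  have hV : v = (x.drop p).map (fun k => ent f k) ++ y.map (fun t => ent f (t + r)) := by
    have h2 := congrArg (List.drop p) heq'
    rw [List.drop_append, ← List.map_drop] at h2
    rw [List.drop_left' (by simp [hp])] at h2
    simp only [List.length_map] at h2
    rw [Nat.sub_eq_zero_of_le hpn, List.drop_zero] at h2
    exact h2.symm
  -- basic facts about f
  have entf_bounds : ∀ i, 1 ≤ i → i ≤ r + s → 1 ≤ ent f i ∧ ent f i ≤ r + s := by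
    intro i h1 h2
    have hm : ent f i ∈ f := ent_mem h1 (by omega)
    have := (hfst.2 _).1 hm
    omega
  have mono1 : ∀ i j, 1 ≤ i → i < j → j ≤ r → ent f i < ent f j := by
    intro i j h1 h2 h3
    have := hbi 0 (by simp) i j (by simpa) h2 (by simpa)
    exact this
  have mono2 : ∀ i j, r < i → i < j → j ≤ r + s → ent f i < ent f j := by
    intro i j h1 h2 h3
    have := hbi 1 (by simp) i j (by simpa) h2 (by simpa)
    exact this
  have mono_gap : ∀ i t, 1 ≤ i → i + t ≤ r → ent f i + t ≤ ent f (i + t) := by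
    intro i t h1
    induction t with
    | zero => simp
    | succ t ih =>
      intro hb
      have h2 := ih (by omega)
      have h3 := mono1 (i + t) (i + t + 1) (by omega) (by omega) (by omega)
      have : i + (t + 1) = i + t + 1 := by omega
      rw [this]
      omega
  -- block-2 values are small
  have hblk2 : ∀ t, 1 ≤ t → t ≤ s → ent f (t + r) ≤ c := by
    intro t h1 h2
    have hty : t ∈ y := hy.mem_of_le h1 h2
    have hmv : ent f (t + r) ∈ v := by
      rw [hV]
      exact List.mem_append.2 (Or.inr (List.mem_map.2 ⟨t, hty, rfl⟩))
    exact le_rk_of_mem hmv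
  have hc1 : 1 ≤ c := hv.one_le_rk
  have hr1 : 1 ≤ r := hx.one_le_rk
  have hs1 : 1 ≤ s := hy.one_le_rk
  -- c < r + s since u is nonempty with big values
  have hcrs : c < r + s := by
    obtain ⟨k0, hk0⟩ := List.exists_mem_of_ne_nil u hust.1
    have hmem : k0 + c ∈ u.map (· + c) := List.mem_map.2 ⟨k0, hk0, rfl⟩
    rw [← hU] at hmem
    obtain ⟨k1, hk1, he1⟩ := List.mem_map.1 hmem
    have hk1x : k1 ∈ x := List.mem_of_mem_take hk1
    have hb := (hx.2 k1).1 hk1x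
    have hbig := (entf_bounds k1 hb.1 (by omega)).2
    have huk := (hust.2 k0).1 hk0
    omega
  -- the set A of low positions in the first block
  set A : Finset ℕ := (Finset.Icc 1 r).filter (fun i => ent f i ≤ c) with hA
  have hdc : ∀ i ∈ A, ∀ j, 1 ≤ j → j ≤ i → j ∈ A := by
    intro i hi j h1 h2
    simp only [hA, Finset.mem_filter, Finset.mem_Icc] at hi ⊢
    refine ⟨⟨h1, le_trans h2 hi.1.2⟩, ?_⟩
    rcases eq_or_lt_of_le h2 with rfl | hlt
    · exact hi.2
    · exact le_of_lt (lt_of_lt_of_le (mono1 j i h1 hlt hi.1.2) hi.2)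
  have hAeq : A = Finset.Icc 1 A.card := by
    rcases A.eq_empty_or_nonempty with he | hne
    · simp [he]
    · have hMA := A.max'_mem hne
      have h1 : A = Finset.Icc 1 (A.max' hne) := by
        ext j
        rw [Finset.mem_Icc]
        constructor
        · intro hj
          have hj2 := (Finset.mem_filter.1 hj).1
          exact ⟨(Finset.mem_Icc.1 hj2).1, A.le_max' j hj⟩
        · rintro ⟨hj1, hj2⟩
          exact hdc _ hMA j hj1 hj2
      rw [h1, Nat.card_Icc]
      simp
  have har : A.card ≤ r := by
    have h1 : A.card ≤ (Finset.Icc 1 r).card := Finset.card_filter_le _ _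
    rwa [Nat.card_Icc, Nat.add_sub_cancel] at h1
  have shape : ∀ i, 1 ≤ i → i ≤ r → (ent f i ≤ c ↔ i ≤ A.card) := by
    intro i h1 h2
    have hmem : (ent f i ≤ c) ↔ i ∈ A := by
      simp [hA, Finset.mem_filter, Finset.mem_Icc, h1, h2]
    rw [hmem]
    conv_lhs => rw [hAeq]
    rw [Finset.mem_Icc]
    omega
  -- surjectivity of f
  have hsurj : ∀ t, 1 ≤ t → t ≤ r + s → ∃ i, 1 ≤ i ∧ i ≤ r + s ∧ ent f i = t := by
    intro t h1 h2
    obtain ⟨i, hi1, hi2, hie⟩ := exists_ent_eq (hfst.mem_of_le h1 (by omega))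
    exact ⟨i, hi1, by omega, hie⟩
  -- c = A.card + s
  have hcard1 : c ≤ A.card + s := by
    have hsub : Finset.Icc 1 c ⊆
        (Finset.Icc 1 A.card ∪ Finset.Icc (r + 1) (r + s)).image (fun i => ent f i) := by
      intro t ht
      obtain ⟨ht1, ht2⟩ := Finset.mem_Icc.1 ht
      obtain ⟨i, hi1, hi2, hie⟩ := hsurj t ht1 (by omega)
      refine Finset.mem_image.2 ⟨i, ?_, hie⟩
      rcases le_or_gt i r with hir | hir
      · exact Finset.mem_union_left _ (Finset.mem_Icc.2 ⟨hi1, (shape i hi1 hir).1 (by omega)⟩)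
      · exact Finset.mem_union_right _ (Finset.mem_Icc.2 ⟨by omega, hi2⟩)
    have hle1 := Finset.card_le_card hsub
    have hle2 := Finset.card_image_le
      (s := Finset.Icc 1 A.card ∪ Finset.Icc (r + 1) (r + s)) (f := fun i => ent f i)
    have hle3 := Finset.card_union_le (Finset.Icc 1 A.card) (Finset.Icc (r + 1) (r + s))
    rw [Nat.card_Icc] at hle1
    rw [Nat.card_Icc, Nat.card_Icc] at hle3
    omega
  have hcard2 : r + s - c ≤ r - A.card := by
    have hsub : Finset.Icc (c + 1) (r + s) ⊆
        (Finset.Icc (A.card + 1) r).image (fun i => ent f i) := by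
      intro t ht
      obtain ⟨ht1, ht2⟩ := Finset.mem_Icc.1 ht
      obtain ⟨i, hi1, hi2, hie⟩ := hsurj t (by omega) ht2
      have hir : i ≤ r := by
        by_contra hcon
        have := hblk2 (i - r) (by omega) (by omega)
        rw [show i - r + r = i from by omega, hie] at this
        omega
      refine Finset.mem_image.2 ⟨i, Finset.mem_Icc.2 ⟨?_, hir⟩, hie⟩
      have := shape i hi1 hir
      omega
    have hle1 := Finset.card_le_card hsub
    have hle2 := Finset.card_image_le
      (s := Finset.Icc (A.card + 1) r) (f := fun i => ent f i)
    rw [Nat.card_Icc] at hle1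
    rw [Nat.card_Icc] at hle2
    omega
  have hac : c = A.card + s := by omega
  -- f is fully determined above A.card
  have hfull : ∀ i, A.card < i → i ≤ r → ent f i = c + i - A.card := by
    intro i hi1 hi2
    have hl1 : c + 1 ≤ ent f (A.card + 1) := by
      have := shape (A.card + 1) (by omega) (by omega)
      omega
    have hl2 := mono_gap (A.card + 1) (i - (A.card + 1)) (by omega) (by omega)
    rw [show A.card + 1 + (i - (A.card + 1)) = i from by omega] at hl2
    have hu1 := mono_gap i (r - i) (by omega) (by omega)
    rw [show i + (r - i) = r from by omega] at hu1
    have hu2 := (entf_bounds r (by omega) (by omega)).2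
    omega
  -- case split on whether the u-part covers all of x
  rcases eq_or_lt_of_le hpn with hpe | hplt
  · -- p = x.length : then u = x, contradicting inD u
    have hXU : x.map (fun k => ent f k) = u.map (· + c) := by
      rw [← hU, hpe, List.take_length]
    have ha0 : A.card = 0 := by
      have h1x : (1 : ℕ) ∈ x := hx.mem_of_le le_rfl hr1
      have hm : ent f 1 ∈ u.map (· + c) := by
        rw [← hXU]
        exact List.mem_map.2 ⟨1, h1x, rfl⟩
      obtain ⟨k0, hk0, he0⟩ := List.mem_map.1 hm
      have hk0' := (hust.2 k0).1 hk0
      have := shape 1 le_rfl hr1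
      omega
    have hxmap : x.map (fun k => ent f k) = x.map (· + s) := by
      apply List.map_congr_left
      intro k hk
      have hb := (hx.2 k).1 hk
      have := hfull k (by omega) hb.2
      omega
    have hux : u = x := by
      have hmm : u.map (· + s) = x.map (· + s) := by
        rw [← hxmap, hXU, show c = s from by omega]
      exact List.map_injective_iff.2 (add_left_injective s) hmm
    have hu' : inD x := hux ▸ hu
    rw [inD] at hu'
    have hrgh : rk x = rk g + rk h := by rw [hxgh]; exact (isST_cat hg hh).2
    have hg1 := hg.one_le_rk
    have hh1 := hh.one_le_rk
    rcases hu'.2 with (h1 | h1) | ⟨-, hirr, -⟩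
    · rw [h1] at hrgh
      have hone : rk [1] = 1 := rfl
      omega
    · rw [h1] at hrgh
      have hone : rk [1, 1] = 1 := rfl
      omega
    · exact hirr.2 ⟨g, h, hg, hh, hxgh⟩
  · -- p < x.length : x itself decomposes as a backslash, contradicting reducibility
    have hx2ne : x.drop p ≠ [] := by
      apply List.ne_nil_of_length_pos
      rw [List.length_drop]
      omega
    have hx1ne : x.take p ≠ [] := by
      apply List.ne_nil_of_length_pos
      rw [List.length_take]
      omega
    have hm1 : ∀ k ∈ x.take p, A.card < k ∧ k ≤ r := by
      intro k hk
      have hm : ent f k ∈ u.map (· + c) := by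
        rw [← hU]
        exact List.mem_map.2 ⟨k, hk, rfl⟩
      obtain ⟨k0, hk0, he0⟩ := List.mem_map.1 hm
      have hk0' := (hust.2 k0).1 hk0
      have hkx : k ∈ x := List.mem_of_mem_take hk
      have hb := (hx.2 k).1 hkx
      have := shape k hb.1 hb.2
      omega
    have hm2 : ∀ k ∈ x.drop p, 1 ≤ k ∧ k ≤ A.card := by
      intro k hk
      have hmv : ent f k ∈ v := by
        rw [hV]
        exact List.mem_append.2 (Or.inl (List.mem_map.2 ⟨k, hk, rfl⟩))
      have hle := le_rk_of_mem hmv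
      have hkx : k ∈ x := List.mem_of_mem_drop hk
      have hb := (hx.2 k).1 hkx
      have := shape k hb.1 hb.2
      omega
    have ha1 : 1 ≤ A.card := by
      obtain ⟨k, hk⟩ := List.exists_mem_of_ne_nil _ hx2ne
      have := hm2 k hk
      omega
    have hx2 : IsST (x.drop p) ∧ rk (x.drop p) = A.card := by
      apply isST_of_forall hx2ne
      intro k
      constructor
      · exact hm2 k
      · rintro ⟨h1, h2⟩
        have hkx : k ∈ x := hx.mem_of_le h1 (by omega)
        have : k ∈ x.take p ++ x.drop p := by rw [List.take_append_drop]; exact hkx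
        rcases List.mem_append.1 this with hk1 | hk2
        · have := hm1 k hk1
          omega
        · exact hk2
    have hx1 : IsST ((x.take p).map (· - A.card)) ∧
        rk ((x.take p).map (· - A.card)) = r - A.card := by
      apply isST_of_forall (by simpa using hx1ne)
      intro k
      constructor
      · intro hk
        obtain ⟨k0, hk0, hke⟩ := List.mem_map.1 hk
        have := hm1 k0 hk0
        omega
      · rintro ⟨h1, h2⟩
        have hkx : k + A.card ∈ x := hx.mem_of_le (by omega) (by omega)
        have hsplit : k + A.card ∈ x.take p ++ x.drop p := by
          rw [List.take_append_drop]; exact hkx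
        rcases List.mem_append.1 hsplit with hk1 | hk2
        · exact List.mem_map.2 ⟨k + A.card, hk1, by omega⟩
        · have := hm2 _ hk2
          omega
    have hxb : x = bsl ((x.take p).map (· - A.card)) (x.drop p) := by
      rw [bsl_eq hx1.1 hx2.1, hx2.2, List.map_map]
      have hid : (x.take p).map ((· + A.card) ∘ (· - A.card)) = x.take p := by
        have : ∀ k ∈ x.take p, ((· + A.card) ∘ (· - A.card)) k = k := by
          intro k hk
          have := hm1 k hk
          simp only [Function.comp]
          omega
        rw [List.map_congr_left this]
        simp
      rw [hid, List.take_append_drop]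
    exact cat_ne_bsl hg hh hx1.1 hx2.1 (hxgh.symm.trans hxb)



end Aux3

/-- if `x` is reducible and `f ∈ Sh^≺(r,s)`, then `f∘(x×y)` is either reducible
or belongs to `𝔅(l)` for some `0 ≤ l < m`. -/
theorem statement_16 (x y f : List ℕ) (n r m s : ℕ)
    (hx : memST x n r) (hxred : ¬ Irr x) (hy : memST y m s)
    (hf : IsShuffle [r, s] f) (hfp : ent f (r + s) < ent f r) :
    (IsST (wcomp f (cat x y)) ∧ ¬ Irr (wcomp f (cat x y))) ∨
      ∃ l, l < m ∧ inBfrak l (wcomp f (cat x y)) := by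
  obtain ⟨hxst, rfl, rfl⟩ := hx
  obtain ⟨hyst, rfl, rfl⟩ := hy
  have hsum : ([rk x, rk y] : List ℕ).sum = rk x + rk y := by simp
  have hflen : f.length = rk x + rk y := by rw [hf.1.2.1, hsum]
  have hfrk : rk f = rk x + rk y := by rw [hf.2, hsum]
  by_cases hirr : Irr (wcomp f (cat x y))
  · right
    rcases irr_decomp hirr with hD | ⟨u, v, hu, hv, hv1, heqw⟩
    · exact ⟨0, List.length_pos_iff.2 hyst.1, by simpa [inBfrak] using hD⟩
    · refine ⟨v.length, ?_, ?_⟩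
      · by_contra hcon
        push_neg at hcon
        have hgh : ∃ g h, IsST g ∧ IsST h ∧ x = cat g h := by
          by_contra hc2
          exact hxred ⟨hxst, hc2⟩
        obtain ⟨g, h, hg, hh, hxgh⟩ := hgh
        exact main_contra hxst hyst hf.1.1 hflen hfrk hf.1.2.2 hg hh hxgh hu hv hcon heqw
      · rw [inBfrak, if_neg (by omega)]
        exact ⟨u, v, hu, hv, rfl, heqw⟩
  · left
    have hcst := isST_cat hxst hyst
    have hwst := isST_wcomp hf.1.1 hcst.1 (by rw [hcst.2, hflen])
    exact ⟨hwst.1, hirr⟩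


end SurjPerm
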